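/- (One-step error contraction of NST+HT+FB with feedback.) Suppose y = Ax + e with x s-sparse, δ_{2s} < 1, and let μ^{k-1} be the previous s-sparse iterate. Let T_k be the index set of the s largest absolute entries of u := μ^{k-1} + Aᵀ(AAᵀ)^{-1}(y - Aμ^{k-1}), and let u^k be defined by u^k_{T_k} = x^k_{T_k} + (A_{T_k}ᵀA_{T_k})^{-1}A_{T_k}ᵀA_{T_k^c}x^k_{T_k^c}, u^k_{T_k^c} = 0, where x^k satisfies Ax^k = y. Then ‖x - u^k‖₂ ≤ √(2γ_{3s}²/(1-δ_{2s}²)) ‖x - μ^{k-1}‖₂ + (√(1+δ_s)/(1-δ_{2s}) + √(2(1+θ_{2s}))/√(1-δ_{2s}²)) ‖e‖₂. -/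

import Mathlib

open Matrix Finset Real MeasureTheory ProbabilityTheory
open scoped BigOperators

noncomputable section

/-- squared Euclidean norm -/
def nsq {n : ℕ} (v : Fin n → ℝ) : ℝ := ∑ i, v i ^ 2

/-- Euclidean norm -/
def nrm {n : ℕ} (v : Fin n → ℝ) : ℝ := Real.sqrt (∑ i, v i ^ 2)

open Classical in
/-- support of a vector, as a finset -/
def suppF {n : ℕ} (x : Fin n → ℝ) : Finset (Fin n) :=
  Finset.univ.filter (fun i => x i ≠ 0)

/-- `x` is `s`-sparse -/
def Sparse {n : ℕ} (s : ℕ) (x : Fin n → ℝ) : Prop := (suppF x).card ≤ s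

/-- `δ` is a restricted isometry constant of order `t` for `A`:
`(1-δ)‖x‖² ≤ ‖Ax‖² ≤ (1+δ)‖x‖²` for all `t`-sparse `x`. -/
def IsRIP {M N : ℕ} (A : Matrix (Fin M) (Fin N) ℝ) (t : ℕ) (δ : ℝ) : Prop :=
  ∀ x : Fin N → ℝ, Sparse t x →
    (1 - δ) * nsq x ≤ nsq (A.mulVec x) ∧ nsq (A.mulVec x) ≤ (1 + δ) * nsq x

/-- restriction of a vector to an index set (zeroing entries outside it) -/
def restr {n : ℕ} (T : Finset (Fin n)) (x : Fin n → ℝ) : Fin n → ℝ :=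
  fun i => if i ∈ T then x i else 0

/-- submatrix of the columns of `A` indexed by `T` -/
def colSub {M N : ℕ} (A : Matrix (Fin M) (Fin N) ℝ) (T : Finset (Fin N)) :
    Matrix (Fin M) T ℝ :=
  fun i j => A i j.val

/-- the feedback step: `μ'_T = x_T + (A_Tᵀ A_T)⁻¹ A_Tᵀ A_{Tᶜ} x_{Tᶜ}`, `μ'_{Tᶜ} = 0`. -/
def feedback {M N : ℕ} (A : Matrix (Fin M) (Fin N) ℝ) (T : Finset (Fin N))
    (x : Fin N → ℝ) : Fin N → ℝ :=
  fun i => if h : i ∈ T then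
    x i + ((((colSub A T)ᵀ * colSub A T)⁻¹ * (colSub A T)ᵀ).mulVec
      (A.mulVec (restr Tᶜ x))) ⟨i, h⟩
  else 0

/-- `hatAbs x k` is the `k`-th largest absolute entry of `x` (1-based index). -/
def hatAbs {n : ℕ} (x : Fin n → ℝ) (k : ℕ) : ℝ :=
  if h : k - 1 < n then |x (Tuple.sort (fun i => -|x i|) ⟨k - 1, h⟩)| else 0

/-- `T` contains the indices of the `p` largest absolute entries of `x`. -/
def containsTop {n : ℕ} (x : Fin n → ℝ) (p : ℕ) (T : Finset (Fin n)) : Prop :=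
  ∀ j : Fin n, (j : ℕ) < p → Tuple.sort (fun i => -|x i|) j ∈ T

/-- The NST+HT+FB algorithm: `T k` is the set of the `s` largest absolute entries of the
feasible iterate `x^k`, `μ^k` is the thresholding-plus-feedback of `x^k` on `T k`, and
`x^{k+1} = μ^k + Aᵀ(AAᵀ)⁻¹(y - Aμ^k)` is the null space tuning step. -/
def NSTSpec {M N : ℕ} (A : Matrix (Fin M) (Fin N) ℝ) (y : Fin M → ℝ) (s : ℕ)
    (T : ℕ → Finset (Fin N)) (xs μ : ℕ → Fin N → ℝ) : Prop :=
  (∀ k, A.mulVec (xs k) = y) ∧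
  (∀ k, (T k).card = s) ∧
  (∀ k, ∀ i ∈ T k, ∀ j ∉ T k, |xs k j| ≤ |xs k i|) ∧
  (∀ k, μ k = feedback A (T k) (xs k)) ∧
  (∀ k, xs (k + 1) = μ k + (Aᵀ * (A * Aᵀ)⁻¹).mulVec (y - A.mulVec (μ k)))

/-- The adaptive AdptNST+HT+FB algorithm: identical to NST+HT+FB except that at step `k`
the index set `T k` consists of the `k` largest absolute entries of `x^k`. -/
def AdptSpec {M N : ℕ} (A : Matrix (Fin M) (Fin N) ℝ) (y : Fin M → ℝ)
    (T : ℕ → Finset (Fin N)) (xs μ : ℕ → Fin N → ℝ) : Prop :=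
  (∀ k, A.mulVec (xs k) = y) ∧
  (∀ k, (T k).card = k) ∧
  (∀ k, ∀ i ∈ T k, ∀ j ∉ T k, |xs k j| ≤ |xs k i|) ∧
  (∀ k, μ k = feedback A (T k) (xs k)) ∧
  (∀ k, xs (k + 1) = μ k + (Aᵀ * (A * Aᵀ)⁻¹).mulVec (y - A.mulVec (μ k)))

/-- The square root of a positive semidefinite matrix (removed from Mathlib; old definition). -/
def Matrix.PosSemidef.sqrt {n : Type*} [Fintype n] [DecidableEq n] {A : Matrix n n ℝ}
    (hA : A.PosSemidef) : Matrix n n ℝ :=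
  hA.1.eigenvectorUnitary.1 * diagonal ((↑) ∘ (√·) ∘ hA.1.eigenvalues) *
    (star hA.1.eigenvectorUnitary : Matrix n n ℝ)

namespace StmtAux

lemma psd_sqrt_mul_self {m : ℕ} (K : Matrix (Fin m) (Fin m) ℝ) (hK : K.PosSemidef) :
    hK.sqrt * hK.sqrt = K := by
  have hD : diagonal ((↑) ∘ (√·) ∘ hK.1.eigenvalues) *
      diagonal ((↑) ∘ (√·) ∘ hK.1.eigenvalues) =
      diagonal (RCLike.ofReal ∘ hK.1.eigenvalues : Fin m → ℝ) := by
    rw [diagonal_mul_diagonal]; congr 1; funext i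
    simp [Real.mul_self_sqrt (hK.eigenvalues_nonneg i)]
  have hUU : (star hK.1.eigenvectorUnitary : Matrix (Fin m) (Fin m) ℝ) *
      hK.1.eigenvectorUnitary.1 = 1 := Unitary.coe_star_mul_self _
  conv_rhs => rw [hK.1.spectral_theorem, Unitary.conjStarAlgAut_apply]
  unfold Matrix.PosSemidef.sqrt
  simp only [Matrix.mul_assoc]
  rw [← Matrix.mul_assoc (star hK.1.eigenvectorUnitary : Matrix (Fin m) (Fin m) ℝ), hUU,
    Matrix.one_mul, ← Matrix.mul_assoc (diagonal _) (diagonal _), hD]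

lemma psd_sqrt_conjTranspose {m : ℕ} (K : Matrix (Fin m) (Fin m) ℝ) (hK : K.PosSemidef) :
    hK.sqrtᴴ = hK.sqrt := by
  unfold Matrix.PosSemidef.sqrt
  rw [Matrix.conjTranspose_mul, Matrix.conjTranspose_mul, Matrix.diagonal_conjTranspose]
  simp [Matrix.mul_assoc, Matrix.star_eq_conjTranspose]

open Matrix Finset Real

variable {n : ℕ}

lemma nsq_nonneg (v : Fin n → ℝ) : 0 ≤ nsq v := Finset.sum_nonneg fun i _ => sq_nonneg _
lemma nrm_nonneg (v : Fin n → ℝ) : 0 ≤ nrm v := Real.sqrt_nonneg _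
lemma nrm_eq (v : Fin n → ℝ) : nrm v = Real.sqrt (nsq v) := rfl
lemma nrm_sq (v : Fin n → ℝ) : nrm v ^ 2 = nsq v := Real.sq_sqrt (nsq_nonneg v)
lemma nsq_eq_dot (v : Fin n → ℝ) : nsq v = v ⬝ᵥ v := by
  simp [nsq, dotProduct, sq]
lemma nsq_zero : nsq (0 : Fin n → ℝ) = 0 := by simp [nsq]
lemma nrm_zero : nrm (0 : Fin n → ℝ) = 0 := by simp [nrm]
lemma nsq_eq_zero_iff (v : Fin n → ℝ) : nsq v = 0 ↔ v = 0 := by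
  constructor
  · intro h; funext i
    have h1 : ∀ j ∈ Finset.univ, (0:ℝ) ≤ v j ^ 2 := fun j _ => sq_nonneg _
    have := (Finset.sum_eq_zero_iff_of_nonneg h1).1 h i (Finset.mem_univ i)
    exact pow_eq_zero_iff (by norm_num) |>.1 this
  · rintro rfl; exact nsq_zero
lemma nrm_pos_of_ne (v : Fin n → ℝ) (hv : v ≠ 0) : 0 < nrm v := by
  rw [nrm_eq]
  apply Real.sqrt_pos.2
  rcases lt_or_eq_of_le (nsq_nonneg v) with h | h
  · exact h
  · exact absurd ((nsq_eq_zero_iff v).1 h.symm) hv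
lemma nsq_smul (c : ℝ) (v : Fin n → ℝ) : nsq (c • v) = c^2 * nsq v := by
  simp [nsq, Finset.mul_sum, mul_pow]
lemma nsq_add (u v : Fin n → ℝ) : nsq (u + v) = nsq u + 2 * (u ⬝ᵥ v) + nsq v := by
  simp only [nsq, dotProduct, Pi.add_apply, Finset.mul_sum, ← Finset.sum_add_distrib]
  apply Finset.sum_congr rfl; intro i _; ring
lemma nsq_sub (u v : Fin n → ℝ) : nsq (u - v) = nsq u - 2 * (u ⬝ᵥ v) + nsq v := by
  simp only [nsq, dotProduct, Pi.sub_apply, Finset.mul_sum, ← Finset.sum_sub_distrib,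
    ← Finset.sum_add_distrib]
  apply Finset.sum_congr rfl; intro i _; ring
lemma nsq_neg (v : Fin n → ℝ) : nsq (-v) = nsq v := by simp [nsq]
lemma nrm_neg (v : Fin n → ℝ) : nrm (-v) = nrm v := by simp [nrm]
lemma nrm_sub_comm (u v : Fin n → ℝ) : nrm (u - v) = nrm (v - u) := by
  rw [nrm_eq, nrm_eq, ← nsq_neg (u - v)]; norm_num
lemma dot_le_nrm_mul_nrm (u v : Fin n → ℝ) : u ⬝ᵥ v ≤ nrm u * nrm v := by
  have h := Finset.sum_mul_sq_le_sq_mul_sq Finset.univ u v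
  have h2 : u ⬝ᵥ v ≤ Real.sqrt ((u ⬝ᵥ v)^2) := by
    rw [Real.sqrt_sq_eq_abs]; exact le_abs_self _
  calc u ⬝ᵥ v ≤ Real.sqrt ((u ⬝ᵥ v)^2) := h2
    _ ≤ Real.sqrt (nsq u * nsq v) := Real.sqrt_le_sqrt (by simpa [nsq, dotProduct] using h)
    _ = nrm u * nrm v := by rw [Real.sqrt_mul (nsq_nonneg u), nrm_eq, nrm_eq]
lemma nrm_add_le (u v : Fin n → ℝ) : nrm (u + v) ≤ nrm u + nrm v := by
  have h1 : nsq (u + v) ≤ (nrm u + nrm v)^2 := by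
    rw [nsq_add]
    have := dot_le_nrm_mul_nrm u v
    nlinarith [nrm_sq u, nrm_sq v]
  calc nrm (u + v) = Real.sqrt (nsq (u+v)) := rfl
    _ ≤ Real.sqrt ((nrm u + nrm v)^2) := Real.sqrt_le_sqrt h1
    _ = nrm u + nrm v := Real.sqrt_sq (add_nonneg (nrm_nonneg u) (nrm_nonneg v))
lemma nrm_pair_le (u v : Fin n → ℝ) :
    nrm u + nrm v ≤ Real.sqrt 2 * Real.sqrt (nsq u + nsq v) := by
  have h1 : (nrm u + nrm v)^2 ≤ 2 * (nsq u + nsq v) := by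
    nlinarith [sq_nonneg (nrm u - nrm v), nrm_sq u, nrm_sq v]
  calc nrm u + nrm v = Real.sqrt ((nrm u + nrm v)^2) :=
        (Real.sqrt_sq (add_nonneg (nrm_nonneg u) (nrm_nonneg v))).symm
    _ ≤ Real.sqrt (2 * (nsq u + nsq v)) := Real.sqrt_le_sqrt h1
    _ = Real.sqrt 2 * Real.sqrt (nsq u + nsq v) := Real.sqrt_mul (by norm_num) _

lemma mem_suppF {x : Fin n → ℝ} {i : Fin n} : i ∈ suppF x ↔ x i ≠ 0 := by
  simp [suppF]
lemma not_mem_suppF_eq {x : Fin n → ℝ} {i : Fin n} (h : i ∉ suppF x) : x i = 0 := by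
  by_contra hc; exact h (mem_suppF.2 hc)
lemma sparse_of_subset {x : Fin n → ℝ} {R : Finset (Fin n)} {t : ℕ}
    (h : suppF x ⊆ R) (hc : R.card ≤ t) : Sparse t x :=
  le_trans (Finset.card_le_card h) hc
lemma suppF_add_subset (u v : Fin n → ℝ) : suppF (u + v) ⊆ suppF u ∪ suppF v := by
  intro i hi
  rw [mem_suppF] at hi
  rw [Finset.mem_union, mem_suppF, mem_suppF]
  by_contra hc; push_neg at hc
  exact hi (by simp [hc.1, hc.2])
lemma suppF_sub_subset (u v : Fin n → ℝ) : suppF (u - v) ⊆ suppF u ∪ suppF v := by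
  intro i hi
  rw [mem_suppF] at hi
  rw [Finset.mem_union, mem_suppF, mem_suppF]
  by_contra hc; push_neg at hc
  exact hi (by simp [sub_eq_add_neg, hc.1, hc.2])
lemma suppF_smul_subset (c : ℝ) (v : Fin n → ℝ) : suppF (c • v) ⊆ suppF v := by
  intro i hi
  rw [mem_suppF] at hi
  rw [mem_suppF]
  intro h; exact hi (by simp [h])
lemma suppF_restr_subset (T : Finset (Fin n)) (x : Fin n → ℝ) : suppF (restr T x) ⊆ T := by
  intro i hi
  rw [mem_suppF] at hi
  by_contra hc
  exact hi (by simp [restr, hc])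
lemma restr_add (T : Finset (Fin n)) (u v : Fin n → ℝ) :
    restr T (u + v) = restr T u + restr T v := by
  funext i; by_cases h : i ∈ T <;> simp [restr, h]
lemma restr_sub (T : Finset (Fin n)) (u v : Fin n → ℝ) :
    restr T (u - v) = restr T u - restr T v := by
  funext i; by_cases h : i ∈ T <;> simp [restr, h]
lemma restr_add_compl (T : Finset (Fin n)) (x : Fin n → ℝ) :
    restr T x + restr Tᶜ x = x := by
  funext i; by_cases h : i ∈ T <;> simp [restr, h]
lemma nsq_restr_eq_sum (T : Finset (Fin n)) (x : Fin n → ℝ) :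
    nsq (restr T x) = ∑ i ∈ T, x i ^ 2 := by
  rw [nsq, ← Finset.sum_subset (Finset.subset_univ T)]
  · apply Finset.sum_congr rfl; intro i hi; simp [restr, hi]
  · intro i _ hi; simp [restr, hi]
lemma nsq_restr_add_compl (T : Finset (Fin n)) (x : Fin n → ℝ) :
    nsq (restr T x) + nsq (restr Tᶜ x) = nsq x := by
  simp only [nsq, ← Finset.sum_add_distrib]
  apply Finset.sum_congr rfl; intro i _
  by_cases h : i ∈ T <;> simp [restr, h]
lemma dot_restr_self (T : Finset (Fin n)) (x : Fin n → ℝ) :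
    restr T x ⬝ᵥ x = nsq (restr T x) := by
  simp only [nsq, dotProduct]
  apply Finset.sum_congr rfl; intro i _
  by_cases h : i ∈ T <;> simp [restr, h, sq]

lemma sum_sq_le (u : Fin n → ℝ) (Q Q' : Finset (Fin n)) (hcard : Q.card ≤ Q'.card)
    (hdom : ∀ j ∈ Q, ∀ i ∈ Q', (u j)^2 ≤ (u i)^2) :
    ∑ j ∈ Q, u j ^ 2 ≤ ∑ i ∈ Q', u i ^ 2 := by
  rcases Finset.eq_empty_or_nonempty Q with hQ | hQ
  · subst hQ; simp
    exact Finset.sum_nonneg fun i _ => sq_nonneg _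
  have hQ' : Q'.Nonempty := by
    rw [← Finset.card_pos]
    calc 0 < Q.card := Finset.card_pos.2 hQ
      _ ≤ Q'.card := hcard
  obtain ⟨i0, hi0, hmin⟩ := Finset.exists_min_image Q' (fun i => (u i)^2) hQ'
  calc ∑ j ∈ Q, u j ^ 2 ≤ Q.card • (u i0 ^ 2) :=
        Finset.sum_le_card_nsmul Q _ _ (fun j hj => hdom j hj i0 hi0)
    _ ≤ Q'.card • (u i0 ^ 2) := by
        rw [nsmul_eq_mul, nsmul_eq_mul]
        exact mul_le_mul_of_nonneg_right (by exact_mod_cast hcard) (sq_nonneg _)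
    _ ≤ ∑ i ∈ Q', u i ^ 2 := Finset.card_nsmul_le_sum Q' _ _ (fun i hi => hmin i hi)

variable {M N : ℕ}

lemma dot_mulVec' {m' n' : Type*} [Fintype m'] [Fintype n'] (B : Matrix m' n' ℝ)
    (u : n' → ℝ) (w : m' → ℝ) : (B.mulVec u) ⬝ᵥ w = u ⬝ᵥ (Bᵀ.mulVec w) := by
  rw [Matrix.dotProduct_mulVec, Matrix.vecMul_transpose]

lemma nrm_mulVec_le (A : Matrix (Fin M) (Fin N) ℝ) {t : ℕ} {δ : ℝ} (hδ : 0 ≤ 1 + δ)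
    (h : IsRIP A t δ) {z : Fin N → ℝ} (hz : Sparse t z) :
    nrm (A.mulVec z) ≤ Real.sqrt (1 + δ) * nrm z := by
  rw [nrm_eq, nrm_eq, ← Real.sqrt_mul hδ]
  exact Real.sqrt_le_sqrt (h z hz).2

lemma pol (A : Matrix (Fin M) (Fin N) ℝ) {s : ℕ} {δ : ℝ} (h : IsRIP A (2*s) δ)
    (u w : Fin N → ℝ) (R : Finset (Fin N))
    (hu : suppF u ⊆ R) (hw : suppF w ⊆ R) (hR : R.card ≤ 2*s) :
    u ⬝ᵥ w - δ * nrm u * nrm w ≤ (A.mulVec u) ⬝ᵥ (A.mulVec w) := by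
  by_cases hu0 : u = 0
  · subst hu0; simp [nrm_eq, nsq]
  by_cases hw0 : w = 0
  · subst hw0; simp [nrm_eq, nsq]
  set a := nrm u with ha
  set b := nrm w with hb
  have hap : 0 < a := nrm_pos_of_ne u hu0
  have hbp : 0 < b := nrm_pos_of_ne w hw0
  have hsp : ∀ c d : ℝ, Sparse (2*s) (c • u + d • w) := by
    intro c d
    apply sparse_of_subset (R := R) _ hR
    refine subset_trans (suppF_add_subset _ _) ?_
    exact Finset.union_subset (subset_trans (suppF_smul_subset _ _) hu)
      (subset_trans (suppF_smul_subset _ _) hw)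
  have h1 := (h _ (hsp b a)).1
  have hsub : b • u + (-a) • w = b • u - a • w := by module
  have h2 := (h _ (hsp b (-a))).2
  rw [hsub] at h2
  have e1 : A.mulVec (b • u + a • w) = b • A.mulVec u + a • A.mulVec w := by
    rw [Matrix.mulVec_add, Matrix.mulVec_smul, Matrix.mulVec_smul]
  have e2 : A.mulVec (b • u - a • w) = b • A.mulVec u - a • A.mulVec w := by
    rw [Matrix.mulVec_sub, Matrix.mulVec_smul, Matrix.mulVec_smul]
  rw [e1] at h1; rw [e2] at h2
  have d1 : nsq (b • A.mulVec u + a • A.mulVec w)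
      = b^2 * nsq (A.mulVec u) + 2*(a*b)*((A.mulVec u) ⬝ᵥ (A.mulVec w)) + a^2 * nsq (A.mulVec w) := by
    rw [nsq_add, nsq_smul, nsq_smul, smul_dotProduct, dotProduct_smul]
    simp only [smul_eq_mul]
    ring
  have d2 : nsq (b • A.mulVec u - a • A.mulVec w)
      = b^2 * nsq (A.mulVec u) - 2*(a*b)*((A.mulVec u) ⬝ᵥ (A.mulVec w)) + a^2 * nsq (A.mulVec w) := by
    rw [nsq_sub, nsq_smul, nsq_smul, smul_dotProduct, dotProduct_smul]
    simp only [smul_eq_mul]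
    ring
  have s1 : nsq (b • u + a • w) = 2*a^2*b^2 + 2*(a*b)*(u ⬝ᵥ w) := by
    rw [nsq_add, nsq_smul, nsq_smul, smul_dotProduct, dotProduct_smul,
      ← nrm_sq u, ← nrm_sq w, ← ha, ← hb]
    simp only [smul_eq_mul]
    ring
  have s2 : nsq (b • u - a • w) = 2*a^2*b^2 - 2*(a*b)*(u ⬝ᵥ w) := by
    rw [nsq_sub, nsq_smul, nsq_smul, smul_dotProduct, dotProduct_smul,
      ← nrm_sq u, ← nrm_sq w, ← ha, ← hb]
    simp only [smul_eq_mul]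
    ring
  rw [d1, s1] at h1
  rw [d2, s2] at h2
  have hab : 0 < a * b := mul_pos hap hbp
  nlinarith [h1, h2]

def ext {T : Finset (Fin N)} (c : T → ℝ) : Fin N → ℝ :=
  fun i => if h : i ∈ T then c ⟨i, h⟩ else 0

lemma mulVec_ext {T : Finset (Fin N)} (A : Matrix (Fin M) (Fin N) ℝ) (c : T → ℝ) :
    A.mulVec (ext c) = (colSub A T).mulVec c := by
  funext i
  show ∑ j, A i j * ext c j = ∑ j : T, A i j.val * c j
  rw [← Finset.sum_subset (Finset.subset_univ T) (by
    intro j _ hj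
    simp [ext, hj])]
  rw [← Finset.sum_attach T (fun j => A i j * ext c j)]
  rw [← Finset.univ_eq_attach]
  apply Finset.sum_congr rfl
  intro j _
  simp [ext, j.2]

lemma suppF_ext_subset {T : Finset (Fin N)} (c : T → ℝ) : suppF (ext c) ⊆ T := by
  intro i hi
  simp only [suppF, Finset.mem_filter] at hi
  by_contra hc
  exact hi.2 (by simp [ext, hc])

lemma ext_ne_zero {T : Finset (Fin N)} {c : T → ℝ} (hc : c ≠ 0) : ext c ≠ 0 := by
  intro h
  apply hc
  funext j
  have := congrFun h j.val
  simpa [ext, j.2] using this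

lemma gram_isUnit {s : ℕ} {δ : ℝ} (A : Matrix (Fin M) (Fin N) ℝ) (T : Finset (Fin N))
    (hT : T.card ≤ 2*s) (h : IsRIP A (2*s) δ) (hδ : δ < 1) :
    IsUnit ((colSub A T)ᵀ * colSub A T).det := by
  set B := colSub A T
  have hpd : (Bᵀ * B).PosDef := by
    refine Matrix.PosDef.of_dotProduct_mulVec_pos ?_ ?_
    · have := Matrix.isHermitian_conjTranspose_mul_self B
      rwa [Matrix.conjTranspose_eq_transpose_of_trivial] at this
    · intro c hc
      have hsp : Sparse (2*s) (ext c) := sparse_of_subset (suppF_ext_subset c) hT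
      have h1 := (h (ext c) hsp).1
      have hnz : nsq (ext c) ≠ 0 := fun h0 => (ext_ne_zero hc) ((nsq_eq_zero_iff _).1 h0)
      have hpos : 0 < nsq (ext c) := lt_of_le_of_ne (nsq_nonneg _) (Ne.symm hnz)
      have key : star c ⬝ᵥ ((Bᵀ * B).mulVec c) = nsq (A.mulVec (ext c)) := by
        have hst : star c = c := funext fun _ => rfl
        rw [hst, ← Matrix.mulVec_mulVec, ← dot_mulVec' B c (B.mulVec c), nsq_eq_dot,
          mulVec_ext]
      rw [key]
      nlinarith [h1, hpos]
  exact hpd.det_pos.ne'.isUnit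

lemma feedback_eq_ext (A : Matrix (Fin M) (Fin N) ℝ) (T : Finset (Fin N)) (xk : Fin N → ℝ) :
    feedback A T xk = ext (fun j : T => xk j.val +
      ((((colSub A T)ᵀ * colSub A T)⁻¹ * (colSub A T)ᵀ).mulVec
        (A.mulVec (restr Tᶜ xk))) j) := by
  funext i
  by_cases h : i ∈ T <;> simp [feedback, ext, h]

lemma feedback_zero_off (A : Matrix (Fin M) (Fin N) ℝ) (T : Finset (Fin N)) (xk : Fin N → ℝ)
    {i : Fin N} (h : i ∉ T) : feedback A T xk i = 0 := by
  simp [feedback, h]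

lemma feedback_orth (A : Matrix (Fin M) (Fin N) ℝ) (T : Finset (Fin N))
    (xk : Fin N → ℝ) (y : Fin M → ℝ) (hxk : A.mulVec xk = y)
    (hGd : IsUnit ((colSub A T)ᵀ * colSub A T).det) (d : T → ℝ) :
    (y - A.mulVec (feedback A T xk)) ⬝ᵥ (A.mulVec (ext d)) = 0 := by
  set B := colSub A T with hB
  set G := Bᵀ * B with hG
  set w := A.mulVec (restr Tᶜ xk) with hw
  set cvec := (fun j : T => xk j.val + ((G⁻¹ * Bᵀ).mulVec w) j) with hcvec
  have hc1 : ext (fun j : T => xk j.val) = restr T xk := by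
    funext i; by_cases h : i ∈ T <;> simp [ext, restr, h]
  have hsum : cvec = (fun j : T => xk j.val) + (G⁻¹ * Bᵀ).mulVec w := rfl
  have hGc : G.mulVec cvec = Bᵀ.mulVec y := by
    rw [hsum, Matrix.mulVec_add]
    have e2 : G.mulVec ((G⁻¹ * Bᵀ).mulVec w) = Bᵀ.mulVec w := by
      rw [Matrix.mulVec_mulVec, ← Matrix.mul_assoc, Matrix.mul_nonsing_inv _ hGd,
        Matrix.one_mul]
    have e1 : G.mulVec (fun j : T => xk j.val) = Bᵀ.mulVec (A.mulVec (restr T xk)) := by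
      rw [← hc1, mulVec_ext, hG, ← Matrix.mulVec_mulVec]
    rw [e1, e2, hw, ← Matrix.mulVec_add, ← Matrix.mulVec_add, restr_add_compl, hxk]
  have hfb : A.mulVec (feedback A T xk) = B.mulVec cvec := by
    rw [feedback_eq_ext, mulVec_ext]
  rw [hfb, mulVec_ext, dotProduct_comm, dot_mulVec', Matrix.mulVec_sub,
    Matrix.mulVec_mulVec, ← hG, hGc, sub_self, dotProduct_zero]

lemma quad_bound (δ V σ ω ε lam : ℝ) (hδ0 : 0 ≤ δ) (hδ1 : δ < 1)
    (hV : 0 ≤ V) (hσ : 0 ≤ σ) (hω : 0 ≤ ω) (hε : 0 ≤ ε)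
    (hlam : lam = Real.sqrt (1 - δ^2))
    (hpyth : V^2 = σ^2 + ω^2) (hkey : σ ≤ δ*V + ε) :
    V ≤ ω / lam + ε / (1-δ) := by
  have h1 : (0:ℝ) < 1 - δ^2 := by nlinarith
  have hl2 : lam^2 = 1 - δ^2 := by rw [hlam]; exact Real.sq_sqrt h1.le
  have hlp : 0 < lam := by rw [hlam]; positivity
  have hq : lam^2*V^2 - 2*δ*ε*V - ε^2 - ω^2 ≤ 0 := by nlinarith [sq_nonneg (δ*V + ε)]
  have he2 : lam^2*ε^2 = (1-δ^2)*ε^2 := by rw [hl2]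
  have hprod : (lam^2*V - lam*ω - (1+δ)*ε) * (lam^2*V + lam*ω + (1-δ)*ε) ≤ 0 := by
    nlinarith [mul_nonpos_of_nonneg_of_nonpos (sq_nonneg lam) hq,
      mul_nonneg (mul_nonneg hlp.le hω) hε, he2]
  have H : lam^2*V ≤ lam*ω + (1+δ)*ε := by
    by_contra hc
    push_neg at hc
    have h2nd : 0 < lam^2*V + lam*ω + (1-δ)*ε := by
      nlinarith [mul_nonneg (mul_nonneg hlp.le hlp.le) hV, mul_nonneg hlp.le hω,
        mul_nonneg hε hδ0]
    nlinarith [mul_pos (by linarith : 0 < lam^2*V - lam*ω - (1+δ)*ε) h2nd]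
  rw [div_add_div _ _ (ne_of_gt hlp) (by linarith : (1:ℝ)-δ ≠ 0),
    le_div_iff₀ (by nlinarith [mul_pos hlp (by linarith : (0:ℝ) < 1-δ)] : 0 < lam*(1-δ))]
  nlinarith [H, mul_nonneg hε hlp.le, mul_nonneg (mul_nonneg hδ0 hε) hlp.le]

end StmtAux
set_option maxHeartbeats 2000000 in
open StmtAux in
/-- one-step error contraction of NST+HT+FB with feedback. -/
theorem stmt7 {M N : ℕ} (A : Matrix (Fin M) (Fin N) ℝ) (hpd : (A * Aᵀ).PosDef)
    (s : ℕ) (x μprev xk : Fin N → ℝ) (e : Fin M → ℝ) (y : Fin M → ℝ)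
    (hy : y = A.mulVec x + e) (hx : Sparse s x) (hμ : Sparse s μprev)
    (hxk : A.mulVec xk = y)
    (T : Finset (Fin N)) (hT : T.card = s)
    (hTtop : ∀ i ∈ T, ∀ j ∉ T,
      |(μprev + (Aᵀ * (A * Aᵀ)⁻¹).mulVec (y - A.mulVec μprev)) j| ≤
      |(μprev + (Aᵀ * (A * Aᵀ)⁻¹).mulVec (y - A.mulVec μprev)) i|)
    (δs δ2s γ3s θ2s : ℝ)
    (h1 : IsRIP A s δs) (h2 : IsRIP A (2 * s) δ2s) (hδ : δ2s < 1)
    (h3 : ∀ z : Fin N → ℝ, Sparse (3 * s) z →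
      (1 - γ3s) * nsq z ≤ nsq ((hpd.inv.posSemidef.sqrt * A).mulVec z))
    (h4 : IsRIP ((A * Aᵀ)⁻¹ * A) (2 * s) θ2s) :
    nrm (x - feedback A T xk) ≤
      Real.sqrt (2 * γ3s ^ 2 / (1 - δ2s ^ 2)) * nrm (x - μprev) +
      (Real.sqrt (1 + δs) / (1 - δ2s) +
        Real.sqrt (2 * (1 + θ2s)) / Real.sqrt (1 - δ2s ^ 2)) * nrm e := by
  classical
  have hδpos : (0:ℝ) < 1 - δ2s := by linarith
  -- the right-hand side is always nonnegative
  have hRHS : 0 ≤ Real.sqrt (2 * γ3s ^ 2 / (1 - δ2s ^ 2)) * nrm (x - μprev) +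
      (Real.sqrt (1 + δs) / (1 - δ2s) +
        Real.sqrt (2 * (1 + θ2s)) / Real.sqrt (1 - δ2s ^ 2)) * nrm e := by
    apply add_nonneg
    · exact mul_nonneg (Real.sqrt_nonneg _) (nrm_nonneg _)
    · apply mul_nonneg _ (nrm_nonneg _)
      apply add_nonneg
      · exact div_nonneg (Real.sqrt_nonneg _) hδpos.le
      · exact div_nonneg (Real.sqrt_nonneg _) (Real.sqrt_nonneg _)
  -- trivial cases
  by_cases htriv : s = 0 ∨ N = 0
  · have hzero : x - feedback A T xk = 0 := by
      rcases htriv with hs0 | hN0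
      · subst hs0
        have hTe : T = ∅ := Finset.card_eq_zero.1 hT
        have hxe : x = 0 := by
          funext i
          by_contra hc
          have hmem : i ∈ suppF x := mem_suppF.2 hc
          have hpos := Finset.card_pos.2 ⟨i, hmem⟩
          have hxc : (suppF x).card ≤ 0 := hx
          omega
        funext i
        have hfi : feedback A T xk i = 0 := feedback_zero_off A T xk (by simp [hTe])
        simp [hxe, hfi]
      · funext i
        exact absurd i.2 (by omega)
    rw [hzero, nrm_zero]
    exact hRHS
  push_neg at htriv
  have hs1 : 1 ≤ s := Nat.one_le_iff_ne_zero.2 htriv.1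
  have hN1 : 0 < N := Nat.pos_of_ne_zero htriv.2
  -- basis vector facts
  set i0 : Fin N := ⟨0, hN1⟩ with hi0
  set bv : Fin N → ℝ := fun j => if j = i0 then 1 else 0 with hbv
  have hbvsupp : suppF bv ⊆ {i0} := by
    intro j hj
    rw [mem_suppF] at hj
    rw [Finset.mem_singleton]
    by_contra hc
    exact hj (by simp [hbv, hc])
  have hbvnsq : nsq bv = 1 := by
    simp [nsq, hbv, apply_ite (fun t : ℝ => t^2)]
  have hbvsparse : ∀ t : ℕ, 1 ≤ t → Sparse t bv := by
    intro t ht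
    apply sparse_of_subset hbvsupp
    simpa using ht
  have hδ0 : 0 ≤ δ2s := by
    have h := h2 bv (hbvsparse _ (by omega))
    rw [hbvnsq] at h
    nlinarith [h.1, h.2]
  have hδs0 : 0 ≤ 1 + δs := by
    have h := h1 bv (hbvsparse _ (by omega))
    rw [hbvnsq] at h
    nlinarith [h.2, nsq_nonneg (A.mulVec bv)]
  have hθ0 : 0 ≤ 1 + θ2s := by
    have h := h4 bv (hbvsparse _ (by omega))
    rw [hbvnsq] at h
    nlinarith [h.2, nsq_nonneg (((A * Aᵀ)⁻¹ * A).mulVec bv)]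
  -- projection matrix facts
  set K : Matrix (Fin M) (Fin M) ℝ := (A * Aᵀ)⁻¹ with hK
  set Wm : Matrix (Fin M) (Fin M) ℝ := hpd.inv.posSemidef.sqrt with hWm
  set P : Matrix (Fin N) (Fin N) ℝ := Aᵀ * K * A with hP
  have hdet : IsUnit (A * Aᵀ).det := hpd.det_pos.ne'.isUnit
  have hKsymm : Kᵀ = K := by
    rw [hK, Matrix.transpose_nonsing_inv, Matrix.transpose_mul, Matrix.transpose_transpose]
  have hAAK : (A * Aᵀ) * K = 1 := Matrix.mul_nonsing_inv _ hdet
  have hAP : A * P = A := by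
    rw [hP, ← Matrix.mul_assoc, ← Matrix.mul_assoc, hAAK, Matrix.one_mul]
  have hPP : P * P = P := by
    calc P * P = Aᵀ * K * (A * P) := by rw [hP, Matrix.mul_assoc (Aᵀ * K) A P]
    _ = P := by rw [hAP, hP]
  have hPsymm : Pᵀ = P := by
    rw [hP, Matrix.transpose_mul, Matrix.transpose_mul, Matrix.transpose_transpose,
      hKsymm, Matrix.mul_assoc]
  have hWW : Wm * Wm = K := psd_sqrt_mul_self _ hpd.inv.posSemidef
  have hWsymm : Wmᵀ = Wm := by
    have h' : Wmᴴ = Wm := psd_sqrt_conjTranspose _ hpd.inv.posSemidef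
    rwa [Matrix.conjTranspose_eq_transpose_of_trivial] at h'
  have hBtB : (Wm * A)ᵀ * (Wm * A) = P := by
    rw [Matrix.transpose_mul, hWsymm, Matrix.mul_assoc, ← Matrix.mul_assoc Wm Wm A, hWW,
      ← Matrix.mul_assoc, hP]
  have hBP : ∀ z : Fin N → ℝ, nsq ((Wm * A).mulVec z) = z ⬝ᵥ (P.mulVec z) := by
    intro z
    rw [nsq_eq_dot, dot_mulVec' (Wm * A) z ((Wm * A).mulVec z), Matrix.mulVec_mulVec, hBtB]
  have hIP : ∀ z : Fin N → ℝ, nsq ((1 - P).mulVec z) = nsq z - nsq ((Wm * A).mulVec z) := by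
    intro z
    rw [Matrix.sub_mulVec, Matrix.one_mulVec, nsq_sub, hBP]
    have hPz : nsq (P.mulVec z) = z ⬝ᵥ (P.mulVec z) := by
      rw [nsq_eq_dot, dot_mulVec' P z (P.mulVec z), Matrix.mulVec_mulVec, hPsymm, hPP]
    have hcomm : z ⬝ᵥ (P.mulVec z) = P.mulVec z ⬝ᵥ z := dotProduct_comm _ _
    rw [hPz]
    linarith [hcomm]
  have hprojle : ∀ z : Fin N → ℝ, nsq ((Wm * A).mulVec z) ≤ nsq z := by
    intro z
    have h5 := nsq_nonneg ((1 - P).mulVec z)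
    rw [hIP z] at h5
    linarith
  have hγ0 : 0 ≤ γ3s := by
    have h5 := h3 bv (hbvsparse _ (by omega))
    have h6 := hprojle bv
    rw [hbvnsq] at h5 h6
    linarith
  have hIPle : ∀ z : Fin N → ℝ, Sparse (3*s) z →
      nrm ((1 - P).mulVec z) ≤ Real.sqrt γ3s * nrm z := by
    intro z hz
    have h5 : nsq ((1 - P).mulVec z) ≤ γ3s * nsq z := by
      have h6 := h3 z hz
      rw [hIP z]
      linarith
    calc nrm ((1 - P).mulVec z) = Real.sqrt (nsq ((1 - P).mulVec z)) := rfl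
      _ ≤ Real.sqrt (γ3s * nsq z) := Real.sqrt_le_sqrt h5
      _ = Real.sqrt γ3s * nrm z := by rw [Real.sqrt_mul hγ0, nrm_eq]
  -- Part I : the feedback estimate
  set u' : Fin N → ℝ := feedback A T xk with hu'
  set v : Fin N → ℝ := x - u' with hv
  set vT := restr T v with hvT
  set vC := restr Tᶜ v with hvC
  have hGd : IsUnit ((colSub A T)ᵀ * colSub A T).det :=
    gram_isUnit A T (by omega) h2 hδ
  have hu'zero : ∀ i, i ∉ T → u' i = 0 := fun i hi => feedback_zero_off A T xk hi
  have hvCx : vC = restr Tᶜ x := by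
    funext i
    by_cases h : i ∈ Tᶜ
    · have hiT : i ∉ T := Finset.mem_compl.1 h
      simp [hvC, restr, h, hv, hu'zero i hiT]
    · simp [hvC, restr, h]
  have hextv : StmtAux.ext (fun j : T => v j.val) = vT := by
    funext i
    by_cases h : i ∈ T <;> simp [StmtAux.ext, restr, h, hvT]
  have hyAU : y - A.mulVec u' = A.mulVec v + e := by
    rw [hy, hv, Matrix.mulVec_sub]
    abel
  have key1 : (A.mulVec v + e) ⬝ᵥ (A.mulVec vT) = 0 := by
    rw [← hyAU, ← hextv]
    exact feedback_orth A T xk y hxk hGd _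
  have key2 : (A.mulVec v) ⬝ᵥ (A.mulVec vT) = -(e ⬝ᵥ (A.mulVec vT)) := by
    rw [add_dotProduct] at key1
    linarith
  set Sx := suppF x with hSx
  set R := Sx ∪ T with hR
  have hScard : Sx.card ≤ s := hx
  have hcardR : R.card ≤ 2*s := by
    calc R.card ≤ Sx.card + T.card := Finset.card_union_le _ _
    _ ≤ 2*s := by omega
  have hsuppu' : suppF u' ⊆ T := by
    intro i hi
    rw [mem_suppF] at hi
    by_contra hc
    exact hi (hu'zero i hc)
  have hsuppv : suppF v ⊆ R := by
    rw [hv]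
    refine subset_trans (suppF_sub_subset x u') ?_
    exact Finset.union_subset Finset.subset_union_left
      (subset_trans hsuppu' Finset.subset_union_right)
  have hsuppvT : suppF vT ⊆ R :=
    subset_trans (suppF_restr_subset T v) Finset.subset_union_right
  have hpol := pol A h2 v vT R hsuppv hsuppvT hcardR
  have hvvT : v ⬝ᵥ vT = nsq vT := by
    rw [dotProduct_comm]; exact dot_restr_self T v
  have hsparsevT : Sparse s vT := sparse_of_subset (suppF_restr_subset T v) (le_of_eq hT)
  have hAvT : nrm (A.mulVec vT) ≤ Real.sqrt (1+δs) * nrm vT :=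
    nrm_mulVec_le A hδs0 h1 hsparsevT
  have hedot : -(e ⬝ᵥ (A.mulVec vT)) ≤ nrm e * (Real.sqrt (1+δs) * nrm vT) := by
    rw [← neg_dotProduct]
    calc (-e) ⬝ᵥ (A.mulVec vT) ≤ nrm (-e) * nrm (A.mulVec vT) := dot_le_nrm_mul_nrm _ _
      _ = nrm e * nrm (A.mulVec vT) := by rw [nrm_neg]
      _ ≤ nrm e * (Real.sqrt (1+δs) * nrm vT) :=
          mul_le_mul_of_nonneg_left hAvT (nrm_nonneg e)
  set ε0 := Real.sqrt (1+δs) * nrm e with hε0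
  have hε0n : 0 ≤ ε0 := mul_nonneg (Real.sqrt_nonneg _) (nrm_nonneg _)
  have hkeyT : nrm vT ≤ δ2s * nrm v + ε0 := by
    have hch : nsq vT ≤ δ2s * nrm v * nrm vT + nrm e * (Real.sqrt (1+δs) * nrm vT) := by
      have h7 : nsq vT ≤ (A.mulVec v) ⬝ᵥ (A.mulVec vT) + δ2s * nrm v * nrm vT := by
        rw [← hvvT]; linarith [hpol]
      rw [key2] at h7
      linarith [hedot]
    rcases eq_or_lt_of_le (nrm_nonneg vT) with h7 | h7
    · rw [← h7]
      exact add_nonneg (mul_nonneg hδ0 (nrm_nonneg _)) hε0n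
    · have h8 : nrm vT * nrm vT ≤ (δ2s * nrm v + ε0) * nrm vT := by
        nlinarith [hch, nrm_sq vT]
      exact le_of_mul_le_mul_right h8 h7
  have hpyth : nrm v ^ 2 = nrm vT ^2 + nrm vC ^2 := by
    rw [nrm_sq, nrm_sq, nrm_sq, hvT, hvC]
    exact (nsq_restr_add_compl T v).symm
  set lam := Real.sqrt (1 - δ2s^2) with hlam
  have h1δ2 : (0:ℝ) < 1 - δ2s^2 := by nlinarith
  have hlam2 : lam^2 = 1 - δ2s^2 := Real.sq_sqrt h1δ2.le
  have hlampos : 0 < lam := Real.sqrt_pos.2 h1δ2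
  have hfb : nrm v ≤ nrm vC / lam + ε0 / (1 - δ2s) :=
    quad_bound δ2s (nrm v) (nrm vT) (nrm vC) ε0 lam hδ0 hδ (nrm_nonneg v)
      (nrm_nonneg vT) (nrm_nonneg vC) hε0n hlam hpyth hkeyT
  -- Part II : the thresholding estimate
  set uu := μprev + (Aᵀ * K).mulVec (y - A.mulVec μprev) with huu
  have hyAmu : y - A.mulVec μprev = A.mulVec (x - μprev) + e := by
    rw [hy, Matrix.mulVec_sub]; abel
  have iden1 : uu - x = (1 - P).mulVec (μprev - x) + (Aᵀ * K).mulVec e := by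
    rw [huu, hyAmu, Matrix.mulVec_add, Matrix.mulVec_mulVec, ← hP,
      Matrix.sub_mulVec, Matrix.one_mulVec]
    have h9 : P.mulVec (x - μprev) = -(P.mulVec (μprev - x)) := by
      rw [← Matrix.mulVec_neg, neg_sub]
    rw [h9]; abel
  have hsd : (Sx \ T).card ≤ (T \ Sx).card := by
    have h8 := Finset.card_sdiff_add_card_inter Sx T
    have h9 := Finset.card_sdiff_add_card_inter T Sx
    rw [Finset.inter_comm] at h9
    omega
  have hcompx : restr Tᶜ x = restr (Sx \ T) x := by
    funext i
    by_cases hiT : i ∈ T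
    · simp [restr, Finset.mem_compl, hiT, Finset.mem_sdiff]
    · by_cases hiS : i ∈ Sx
      · simp [restr, Finset.mem_compl, hiT, Finset.mem_sdiff, hiS]
      · have hx0 : x i = 0 := not_mem_suppF_eq hiS
        simp [restr, hx0]
  have hstep1 : nrm (restr Tᶜ x) ≤ nrm (restr (Sx\T) (x - uu)) + nrm (restr (Sx\T) uu) := by
    rw [hcompx]
    have h9 : restr (Sx\T) x = restr (Sx\T) (x - uu) + restr (Sx\T) uu := by
      rw [← restr_add, sub_add_cancel]
    rw [h9]; exact nrm_add_le _ _
  have hstep2 : nsq (restr (Sx\T) uu) ≤ nsq (restr (T\Sx) uu) := by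
    rw [nsq_restr_eq_sum, nsq_restr_eq_sum]
    apply sum_sq_le uu _ _ hsd
    intro j hj i hi
    have hjT : j ∉ T := (Finset.mem_sdiff.1 hj).2
    have hiT : i ∈ T := (Finset.mem_sdiff.1 hi).1
    have habs := hTtop i hiT j hjT
    calc (uu j)^2 = |uu j|^2 := (sq_abs _).symm
      _ ≤ |uu i|^2 := by nlinarith [abs_nonneg (uu j), abs_nonneg (uu i)]
      _ = (uu i)^2 := sq_abs _
  have hstep3 : restr (T\Sx) uu = restr (T\Sx) (uu - x) := by
    funext i
    by_cases h : i ∈ T \ Sx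
    · have hiS : i ∉ Sx := (Finset.mem_sdiff.1 h).2
      have hx0 : x i = 0 := not_mem_suppF_eq hiS
      simp [restr, h, hx0]
    · simp [restr, h]
  have hstep4 : nrm (restr (Sx\T) (x - uu)) = nrm (restr (Sx\T) (uu - x)) := by
    rw [restr_sub, restr_sub, nrm_sub_comm]
  have hdisj : Disjoint (Sx \ T) (T \ Sx) := disjoint_sdiff_sdiff
  have hsubR : (Sx\T) ∪ (T\Sx) ⊆ R :=
    Finset.union_subset (subset_trans Finset.sdiff_subset Finset.subset_union_left)
      (subset_trans Finset.sdiff_subset Finset.subset_union_right)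
  have hstep5 : nsq (restr (Sx\T) (uu-x)) + nsq (restr (T\Sx) (uu-x)) ≤ nsq (restr R (uu-x)) := by
    rw [nsq_restr_eq_sum, nsq_restr_eq_sum, nsq_restr_eq_sum, ← Finset.sum_union hdisj]
    exact Finset.sum_le_sum_of_subset_of_nonneg hsubR (fun i _ _ => sq_nonneg _)
  have hμxsparse : Sparse (3*s) (μprev - x) := by
    apply sparse_of_subset (suppF_sub_subset μprev x)
    calc (suppF μprev ∪ suppF x).card ≤ (suppF μprev).card + (suppF x).card :=
          Finset.card_union_le _ _
      _ ≤ 3*s := by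
          have hμc : (suppF μprev).card ≤ s := hμ
          have hxc : (suppF x).card ≤ s := hx
          omega
  have halpha : nrm (restr R ((1 - P).mulVec (μprev - x))) ≤ γ3s * nrm (μprev - x) := by
    set g := restr R ((1 - P).mulVec (μprev - x)) with hg
    have hgsp : Sparse (3*s) g := sparse_of_subset (suppF_restr_subset _ _) (by omega)
    have hQidem : (1 - P) * (1 - P) = (1 - P) := by
      rw [Matrix.mul_sub, Matrix.sub_mul, Matrix.sub_mul, hPP, Matrix.one_mul,
        Matrix.mul_one, Matrix.one_mul]
      abel
    have hQsymm : (1 - P)ᵀ = 1 - P := by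
      rw [Matrix.transpose_sub, Matrix.transpose_one, hPsymm]
    have hdotg : nsq g = ((1-P).mulVec g) ⬝ᵥ ((1-P).mulVec (μprev - x)) := by
      have e1 : nsq g = g ⬝ᵥ ((1-P).mulVec (μprev - x)) := by
        rw [hg]; exact (dot_restr_self R _).symm
      rw [e1]
      calc g ⬝ᵥ ((1-P).mulVec (μprev - x))
          = g ⬝ᵥ ((1-P).mulVec ((1-P).mulVec (μprev - x))) := by
            rw [Matrix.mulVec_mulVec, hQidem]
        _ = ((1-P).mulVec g) ⬝ᵥ ((1-P).mulVec (μprev - x)) := by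
            rw [dot_mulVec' (1-P) g ((1-P).mulVec (μprev - x)), hQsymm]
    have hγs : Real.sqrt γ3s * Real.sqrt γ3s = γ3s := Real.mul_self_sqrt hγ0
    have hCSg : nsq g ≤ γ3s * (nrm g * nrm (μprev - x)) := by
      calc nsq g = ((1-P).mulVec g) ⬝ᵥ ((1-P).mulVec (μprev - x)) := hdotg
        _ ≤ nrm ((1-P).mulVec g) * nrm ((1-P).mulVec (μprev - x)) := dot_le_nrm_mul_nrm _ _
        _ ≤ (Real.sqrt γ3s * nrm g) * (Real.sqrt γ3s * nrm (μprev - x)) := by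
            apply mul_le_mul (hIPle g hgsp) (hIPle _ hμxsparse) (nrm_nonneg _)
            exact mul_nonneg (Real.sqrt_nonneg _) (nrm_nonneg _)
        _ = (Real.sqrt γ3s * Real.sqrt γ3s) * (nrm g * nrm (μprev - x)) := by ring
        _ = γ3s * (nrm g * nrm (μprev - x)) := by rw [hγs]
    rcases eq_or_lt_of_le (nrm_nonneg g) with h7 | h7
    · rw [← h7]
      exact mul_nonneg hγ0 (nrm_nonneg _)
    · have h8 : nrm g * nrm g ≤ (γ3s * nrm (μprev - x)) * nrm g := by
        nlinarith [hCSg, nrm_sq g]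
      exact le_of_mul_le_mul_right h8 h7
  have hbeta : nrm (restr R ((Aᵀ * K).mulVec e)) ≤ Real.sqrt (1+θ2s) * nrm e := by
    set g2 := restr R ((Aᵀ * K).mulVec e) with hg2
    have hg2sp : Sparse (2*s) g2 := sparse_of_subset (suppF_restr_subset _ _) hcardR
    have hdot2 : nsq g2 = ((K * A).mulVec g2) ⬝ᵥ e := by
      have e1 : nsq g2 = g2 ⬝ᵥ ((Aᵀ * K).mulVec e) := by
        rw [hg2]; exact (dot_restr_self R _).symm
      rw [e1, dot_mulVec' (K * A) g2 e, Matrix.transpose_mul, hKsymm]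
    have hKA : nrm ((K * A).mulVec g2) ≤ Real.sqrt (1+θ2s) * nrm g2 :=
      nrm_mulVec_le _ hθ0 h4 hg2sp
    have hCS2 : nsq g2 ≤ (Real.sqrt (1+θ2s) * nrm g2) * nrm e := by
      calc nsq g2 = ((K * A).mulVec g2) ⬝ᵥ e := hdot2
        _ ≤ nrm ((K * A).mulVec g2) * nrm e := dot_le_nrm_mul_nrm _ _
        _ ≤ (Real.sqrt (1+θ2s) * nrm g2) * nrm e :=
            mul_le_mul_of_nonneg_right hKA (nrm_nonneg _)
    rcases eq_or_lt_of_le (nrm_nonneg g2) with h7 | h7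
    · rw [← h7]
      exact mul_nonneg (Real.sqrt_nonneg _) (nrm_nonneg _)
    · have h8 : nrm g2 * nrm g2 ≤ (Real.sqrt (1+θ2s) * nrm e) * nrm g2 := by
        nlinarith [hCS2, nrm_sq g2]
      exact le_of_mul_le_mul_right h8 h7
  have homega : nrm vC ≤ Real.sqrt 2 * (γ3s * nrm (x - μprev) + Real.sqrt (1+θ2s) * nrm e) := by
    rw [hvCx]
    have hs2' : nrm (restr (Sx\T) uu) ≤ nrm (restr (T\Sx) uu) := by
      rw [nrm_eq, nrm_eq]
      exact Real.sqrt_le_sqrt hstep2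
    have hlast : nrm (restr R (uu - x)) ≤ γ3s * nrm (x - μprev) + Real.sqrt (1+θ2s) * nrm e := by
      have h9 : restr R (uu - x)
          = restr R ((1 - P).mulVec (μprev - x)) + restr R ((Aᵀ * K).mulVec e) := by
        rw [← restr_add, ← iden1]
      rw [h9]
      calc nrm (restr R ((1 - P).mulVec (μprev - x)) + restr R ((Aᵀ * K).mulVec e))
          ≤ nrm (restr R ((1 - P).mulVec (μprev - x))) + nrm (restr R ((Aᵀ * K).mulVec e)) :=
            nrm_add_le _ _
        _ ≤ γ3s * nrm (μprev - x) + Real.sqrt (1+θ2s) * nrm e := add_le_add halpha hbeta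
        _ = γ3s * nrm (x - μprev) + Real.sqrt (1+θ2s) * nrm e := by rw [nrm_sub_comm]
    calc nrm (restr Tᶜ x) ≤ nrm (restr (Sx\T) (x - uu)) + nrm (restr (Sx\T) uu) := hstep1
      _ = nrm (restr (Sx\T) (uu - x)) + nrm (restr (Sx\T) uu) := by rw [hstep4]
      _ ≤ nrm (restr (Sx\T) (uu - x)) + nrm (restr (T\Sx) uu) := by linarith [hs2']
      _ = nrm (restr (Sx\T) (uu - x)) + nrm (restr (T\Sx) (uu - x)) := by rw [hstep3]
      _ ≤ Real.sqrt 2 * Real.sqrt (nsq (restr (Sx\T) (uu-x)) + nsq (restr (T\Sx) (uu-x))) :=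
          nrm_pair_le _ _
      _ ≤ Real.sqrt 2 * nrm (restr R (uu - x)) := by
          apply mul_le_mul_of_nonneg_left _ (Real.sqrt_nonneg 2)
          rw [nrm_eq]
          exact Real.sqrt_le_sqrt hstep5
      _ ≤ Real.sqrt 2 * (γ3s * nrm (x - μprev) + Real.sqrt (1+θ2s) * nrm e) :=
          mul_le_mul_of_nonneg_left hlast (Real.sqrt_nonneg 2)
  -- final assembly
  have hfb2 : nrm v ≤ (Real.sqrt 2 * (γ3s * nrm (x - μprev) + Real.sqrt (1+θ2s) * nrm e)) / lam
      + ε0 / (1 - δ2s) := by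
    refine le_trans hfb (add_le_add ?_ le_rfl)
    exact div_le_div_of_nonneg_right homega hlampos.le
  have hsq2 : Real.sqrt (2*(1+θ2s)) = Real.sqrt 2 * Real.sqrt (1+θ2s) :=
    Real.sqrt_mul (by norm_num) _
  have hsq1 : Real.sqrt (2 * γ3s^2 / (1 - δ2s^2)) = Real.sqrt 2 * γ3s / lam := by
    have hval : 2 * γ3s^2 / (1 - δ2s^2) = (Real.sqrt 2 * γ3s / lam)^2 := by
      rw [div_pow, mul_pow, Real.sq_sqrt (by norm_num : (0:ℝ) ≤ 2), hlam2]
    rw [hval, Real.sqrt_sq (by positivity)]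
  calc nrm v ≤ (Real.sqrt 2 * (γ3s * nrm (x - μprev) + Real.sqrt (1+θ2s) * nrm e)) / lam
      + ε0 / (1 - δ2s) := hfb2
    _ = Real.sqrt (2 * γ3s ^ 2 / (1 - δ2s ^ 2)) * nrm (x - μprev) +
      (Real.sqrt (1 + δs) / (1 - δ2s) +
        Real.sqrt (2 * (1 + θ2s)) / lam) * nrm e := by
        rw [hsq1, hsq2, hε0]; ring
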